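/- Let q be any complex number, let R̂_{S14} be the 4×4 matrix with rows (0,0,0,q), (0,1,0,0), (0,0,1,0), (q,0,0,0), and let M be the 4×4 matrix with rows (1,0,0,1), (0,1,−1,0), (0,1,1,0), (−1,0,0,1) (the S03 braid matrix). Then M is invertible and M·R̂_{S14}·M⁻¹ = diag(q, 1, 1, −q). -/

import Mathlib

/-- The braid matrix of the exotic case `S03` (used here as diagonalizer). -/
noncomputable def MS03 : Matrix (Fin 4) (Fin 4) ℂ :=
  !![1, 0, 0, 1; 0, 1, -1, 0; 0, 1, 1, 0; -1, 0, 0, 1]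

/-- The braid matrix of the exotic case `S14`. -/
noncomputable def RS14 (q : ℂ) : Matrix (Fin 4) (Fin 4) ℂ :=
  !![0, 0, 0, q; 0, 1, 0, 0; 0, 0, 1, 0; q, 0, 0, 0]

noncomputable def NS03 : Matrix (Fin 4) (Fin 4) ℂ :=
  !![1/2, 0, 0, -1/2; 0, 1/2, 1/2, 0; 0, -1/2, 1/2, 0; 1/2, 0, 0, 1/2]

lemma MN : MS03 * NS03 = 1 := by
  simp only [MS03, NS03]
  ext i j
  fin_cases i <;> fin_cases j <;>
    simp [Matrix.mul_apply, Fin.sum_univ_four, Matrix.one_apply] <;> ring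

lemma NM : NS03 * MS03 = 1 := by
  simp only [MS03, NS03]
  ext i j
  fin_cases i <;> fin_cases j <;>
    simp [Matrix.mul_apply, Fin.sum_univ_four, Matrix.one_apply] <;> ring

/-- the `S03` braid matrix diagonalizes the `S14` braid matrix:
`M R̂_{S14} M⁻¹ = diag(q, 1, 1, -q)`. -/
theorem s14_diagonalized_by_s03 (q : ℂ) :
    IsUnit MS03 ∧
    MS03 * RS14 q * MS03⁻¹ = Matrix.diagonal ![q, 1, 1, -q] := by
  refine ⟨⟨⟨MS03, NS03, MN, NM⟩, rfl⟩, ?_⟩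
  rw [Matrix.inv_eq_right_inv MN]
  simp only [MS03, RS14, NS03]
  ext i j
  fin_cases i <;> fin_cases j <;>
    simp [Matrix.mul_apply, Fin.sum_univ_four, Matrix.diagonal] <;> ring
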